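/- Let $h, v \colon \mathbb{R} \to \mathbb{R}$ be $C^1$ functions that are $1$-periodic, let $c \in \mathbb{R}$, and suppose that $e^{h(s)} v'(s) + (c + e^{h(s)} h'(s)) v(s) > -1$ for all $s \in \mathbb{R}$. If there exists $s_0 \in [0,1]$ with $v(s_0) = 0$, then there is a constant $C$ depending only on $c$ and $h$ (not on $v$) such that $|v(s)| \leq C$ for all $s \in \mathbb{R}$. -/

import Mathlib

open intervalIntegral Real

/-- Periodic ODE comparison lemma: if `h, v` are `C¹` and 1-periodic,
`e^{h} v' + (c + e^{h} h') v > -1` everywhere, and `v` vanishes somewhere in `[0,1]`,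
then `|v| ≤ C` for a constant `C` depending only on `c` and `h`. -/
theorem stmt_0 (c : ℝ) (h : ℝ → ℝ) (hh : ContDiff ℝ 1 h) (hper : Function.Periodic h 1) :
    ∃ C : ℝ, ∀ v : ℝ → ℝ, ContDiff ℝ 1 v → Function.Periodic v 1 →
      (∀ s : ℝ, Real.exp (h s) * deriv v s + (c + Real.exp (h s) * deriv h s) * v s > -1) →
      (∃ s₀ ∈ Set.Icc (0:ℝ) 1, v s₀ = 0) →
      ∀ s : ℝ, |v s| ≤ C := by
  set g : ℝ → ℝ := fun s => c * Real.exp (-h s) + deriv h s with hg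
  have hgcont : Continuous g :=
    (continuous_const.mul ((hh.continuous.neg).rexp)).add (hh.continuous_deriv le_rfl)
  set G : ℝ → ℝ := fun s => ∫ τ in (0:ℝ)..s, g τ with hGdef
  have hG : ∀ s, HasDerivAt G (g s) s := fun s =>
    integral_hasDerivAt_right (hgcont.intervalIntegrable _ _)
      (hgcont.stronglyMeasurableAtFilter _ _) hgcont.continuousAt
  have hGcont : Continuous G :=
    (Differentiable.continuous fun s => (hG s).differentiableAt)
  -- the integrand bound
  set φ : ℝ → ℝ := fun τ => Real.exp (G τ - h τ) with hφ
  have hφcont : Continuous φ := (hGcont.sub hh.continuous).rexp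
  set K : ℝ := ∫ τ in (0:ℝ)..2, φ τ with hK
  -- max of exp(-G) on [0,2]
  obtain ⟨x₀, hx₀, hmax⟩ := (isCompact_Icc (a := (0:ℝ)) (b := 2)).exists_isMaxOn
    (Set.nonempty_Icc.2 (by norm_num)) (hGcont.neg.rexp.continuousOn)
  set M : ℝ := Real.exp (-G x₀) with hM
  have hMpos : 0 < M := Real.exp_pos _
  refine ⟨M * K, ?_⟩
  intro v hv hvper hode ⟨s₀, hs₀, hvs₀⟩
  have hvc : Continuous v := hv.continuous
  have hv'c : Continuous (deriv v) := hv.continuous_deriv le_rfl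
  set w : ℝ → ℝ := fun s => Real.exp (G s) * v s with hw
  have hwD : ∀ s, HasDerivAt w (Real.exp (G s) * (deriv v s + g s * v s)) s := by
    intro s
    have h1 : HasDerivAt (fun s => Real.exp (G s)) (Real.exp (G s) * g s) s := (hG s).exp
    have h2 : HasDerivAt v (deriv v s) s := (hv.differentiable one_ne_zero s).hasDerivAt
    have := h1.fun_mul h2
    refine this.congr_deriv ?_
    ring
  have hderw : ∀ s, deriv w s = Real.exp (G s) * (deriv v s + g s * v s) := fun s => (hwD s).deriv
  have hderwcont : Continuous (deriv w) := by
    rw [funext hderw]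
    exact (hGcont.rexp).mul (hv'c.add (hgcont.mul hvc))
  -- pointwise lower bound on deriv w
  have hlb : ∀ s, -(φ s) ≤ deriv w s := by
    intro s
    have heq : deriv w s =
        φ s * (Real.exp (h s) * deriv v s + (c + Real.exp (h s) * deriv h s) * v s) := by
      rw [hderw s]
      simp only [hφ, hg, Real.exp_sub, Real.exp_neg]
      have hne : Real.exp (h s) ≠ 0 := (Real.exp_pos _).ne'
      field_simp
    have hφpos : 0 < φ s := Real.exp_pos _
    calc -(φ s) = φ s * (-1) := by ring
      _ ≤ _ := by rw [heq]; exact mul_le_mul_of_nonneg_left (hode s).le hφpos.le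
  -- FTC inequality
  have key : ∀ a b : ℝ, a ≤ b → w b - w a ≥ -∫ τ in a..b, φ τ := by
    intro a b hab
    have hftc : w b - w a = ∫ τ in a..b, deriv w τ :=
      (integral_deriv_eq_sub (fun s _ => (hwD s).differentiableAt)
        (hderwcont.intervalIntegrable _ _)).symm
    rw [hftc, ge_iff_le, ← intervalIntegral.integral_neg]
    exact intervalIntegral.integral_mono_on hab ((hφcont.neg).intervalIntegrable _ _)
      (hderwcont.intervalIntegrable _ _) (fun x _ => hlb x)
  -- integral bound on subintervals of [0,2]
  have hKbound : ∀ a b : ℝ, 0 ≤ a → a ≤ b → b ≤ 2 → (∫ τ in a..b, φ τ) ≤ K := by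
    intro a b h0 hab h2
    exact intervalIntegral.integral_mono_interval h0 hab h2
      (Filter.Eventually.of_forall fun τ => (Real.exp_pos _).le)
      (hφcont.intervalIntegrable _ _)
  have hKnonneg : 0 ≤ K := by
    rw [hK]
    exact intervalIntegral.integral_nonneg (by norm_num) (fun τ _ => (Real.exp_pos _).le)
  -- bound on [s₀, s₀+1]
  have hbound : ∀ t ∈ Set.Icc s₀ (s₀ + 1), |v t| ≤ M * K := by
    intro t ht
    have ht0 : (0:ℝ) ≤ t := le_trans hs₀.1 ht.1
    have ht2 : t ≤ 2 := le_trans ht.2 (by linarith [hs₀.2])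
    have hws₀ : w s₀ = 0 := by simp [hw, hvs₀]
    have hws₁ : w (s₀ + 1) = 0 := by simp [hw, hvper s₀, hvs₀]
    have h1 : w t ≥ -K := by
      have := key s₀ t ht.1
      have hb := hKbound s₀ t hs₀.1 ht.1 ht2
      rw [hws₀] at this; linarith
    have h2 : w t ≤ K := by
      have := key t (s₀ + 1) ht.2
      have hb := hKbound t (s₀ + 1) ht0 ht.2 (by linarith [hs₀.2])
      rw [hws₁] at this; linarith
    have hwabs : |w t| ≤ K := abs_le.2 ⟨h1, h2⟩
    have hvt : v t = Real.exp (-G t) * w t := by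
      rw [hw]
      rw [Real.exp_neg]
      field_simp
    rw [hvt, abs_mul, abs_of_pos (Real.exp_pos _)]
    have hMle : Real.exp (-G t) ≤ M := hmax ⟨ht0, ht2⟩
    exact mul_le_mul hMle hwabs (abs_nonneg _) hMpos.le
  -- extend to all of ℝ by periodicity
  intro s
  set n : ℤ := ⌊s - s₀⌋ with hn
  have h1 : s - n ∈ Set.Icc s₀ (s₀ + 1) := by
    constructor
    · have := Int.floor_le (s - s₀); linarith
    · have := Int.lt_floor_add_one (s - s₀); linarith
  have h2 : v (s - n) = v s := by
    have := hvper.sub_int_mul_eq (x := s) n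
    simpa using this
  rw [← h2]
  exact hbound _ h1
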